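/- Let G be a group and σ : G → G an involutive anti-automorphism (σ(x*y) = σ(y)*σ(x) and σ(σ(x)) = x for all x, y). Let δ > 0 and f : G → ℂ satisfy |f(x*y) + f(x*σ(y)) − 2·f(x)·f(y)| ≤ δ for all x, y ∈ G. Then either |f(x)| ≤ (1 + √(1+2δ))/2 for all x ∈ G, or f(x*y) + f(x*σ(y)) = 2·f(x)·f(y) for all x, y ∈ G. -/

import Mathlib

private lemma aux_bound (p q d1 d2 d3 d4 d5 d6 d7 d8 d9 d10 d11 : ℂ) (δ : ℝ)
    (h1 : ‖d1‖ ≤ δ) (h2 : ‖d2‖ ≤ δ) (h3 : ‖d3‖ ≤ δ) (h4 : ‖d4‖ ≤ δ)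
    (h5 : ‖d5‖ ≤ δ) (h6 : ‖d6‖ ≤ δ) (h7 : ‖d7‖ ≤ δ) (h8 : ‖d8‖ ≤ δ)
    (h9 : ‖d9‖ ≤ δ) (h10 : ‖d10‖ ≤ δ) (h11 : ‖d11‖ ≤ δ) :
    ‖2*p*(d1+d2) + (d3+d4+d5+d6) - 2*q*d7 - d8 - d9 - d10 - d11‖
      ≤ (4*‖p‖ + 2*‖q‖ + 8) * δ := by
  have hδ0 : 0 ≤ δ := le_trans (norm_nonneg d1) h1
  have h2c : ‖(2:ℂ)‖ = 2 := by norm_num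
  have tA : ‖2*p*(d1+d2)‖ ≤ 2*‖p‖*(2*δ) := by
    rw [norm_mul, norm_mul, h2c]
    have := norm_add_le d1 d2
    have hp := norm_nonneg p
    nlinarith
  have tB : ‖d3+d4+d5+d6‖ ≤ 4*δ := by
    calc ‖d3+d4+d5+d6‖ ≤ ‖d3+d4+d5‖ + ‖d6‖ := norm_add_le _ _
      _ ≤ (‖d3+d4‖ + ‖d5‖) + ‖d6‖ := by linarith [norm_add_le (d3+d4) d5]
      _ ≤ ((‖d3‖+‖d4‖) + ‖d5‖) + ‖d6‖ := by linarith [norm_add_le d3 d4]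
      _ ≤ 4*δ := by linarith
  have tC : ‖2*q*d7‖ ≤ 2*‖q‖*δ := by
    rw [norm_mul, norm_mul, h2c]
    have hq := norm_nonneg q
    nlinarith
  calc ‖2*p*(d1+d2) + (d3+d4+d5+d6) - 2*q*d7 - d8 - d9 - d10 - d11‖
      ≤ ‖2*p*(d1+d2) + (d3+d4+d5+d6) - 2*q*d7 - d8 - d9 - d10‖ + ‖d11‖ :=
        norm_sub_le _ _
    _ ≤ (‖2*p*(d1+d2) + (d3+d4+d5+d6) - 2*q*d7 - d8 - d9‖ + ‖d10‖) + ‖d11‖ := by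
        linarith [norm_sub_le (2*p*(d1+d2) + (d3+d4+d5+d6) - 2*q*d7 - d8 - d9) d10]
    _ ≤ ((‖2*p*(d1+d2) + (d3+d4+d5+d6) - 2*q*d7 - d8‖ + ‖d9‖) + ‖d10‖) + ‖d11‖ := by
        linarith [norm_sub_le (2*p*(d1+d2) + (d3+d4+d5+d6) - 2*q*d7 - d8) d9]
    _ ≤ (((‖2*p*(d1+d2) + (d3+d4+d5+d6) - 2*q*d7‖ + ‖d8‖) + ‖d9‖) + ‖d10‖) + ‖d11‖ := by
        linarith [norm_sub_le (2*p*(d1+d2) + (d3+d4+d5+d6) - 2*q*d7) d8]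
    _ ≤ ((((‖2*p*(d1+d2) + (d3+d4+d5+d6)‖ + ‖2*q*d7‖) + ‖d8‖) + ‖d9‖) + ‖d10‖) + ‖d11‖ := by
        linarith [norm_sub_le (2*p*(d1+d2) + (d3+d4+d5+d6)) (2*q*d7)]
    _ ≤ (((((‖2*p*(d1+d2)‖ + ‖d3+d4+d5+d6‖) + ‖2*q*d7‖) + ‖d8‖) + ‖d9‖) + ‖d10‖) + ‖d11‖ := by
        linarith [norm_add_le (2*p*(d1+d2)) (d3+d4+d5+d6)]
    _ ≤ (4*‖p‖ + 2*‖q‖ + 8) * δ := by nlinarith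

theorem stmt_2 (G : Type*) [Group G] (σ : G → G)
    (hanti : ∀ x y : G, σ (x * y) = σ y * σ x) (hinv : ∀ x : G, σ (σ x) = x)
    (δ : ℝ) (hδ : 0 < δ) (f : G → ℂ)
    (h : ∀ x y : G, ‖f (x * y) + f (x * σ y) - 2 * f x * f y‖ ≤ δ) :
    (∀ x : G, ‖f x‖ ≤ (1 + Real.sqrt (1 + 2 * δ)) / 2) ∨
    (∀ x y : G, f (x * y) + f (x * σ y) = 2 * f x * f y) := by
  by_cases hb : ∀ x : G, ‖f x‖ ≤ (1 + Real.sqrt (1 + 2 * δ)) / 2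
  · exact Or.inl hb
  right
  push_neg at hb
  obtain ⟨x₀, hx₀⟩ := hb
  have h' : ∀ x y : G, ‖f (x * y) + f (x * σ y) - 2 * f x * f y‖ ≤ δ := by
    intro x y; simpa using h x y
  have hx₀' : (1 + Real.sqrt (1 + 2 * δ)) / 2 < ‖f x₀‖ := by
    simpa using hx₀
  obtain ⟨c₀, hc₀def⟩ : ∃ c : ℝ, c = ‖f x₀‖ := ⟨_, rfl⟩
  obtain ⟨s, hsdef⟩ : ∃ t : ℝ, t = Real.sqrt (1 + 2*δ) := ⟨_, rfl⟩
  rw [← hsdef] at hx₀'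
  rw [← hc₀def] at hx₀'
  have hs : s ^ 2 = 1 + 2*δ := by rw [hsdef]; exact Real.sq_sqrt (by linarith)
  have hsnn' : 0 ≤ s := by rw [hsdef]; exact Real.sqrt_nonneg _
  have hsnn : 0 ≤ s := hsnn'
  have hs1 : 1 < s := by nlinarith
  have hc1 : 1 < c₀ := by nlinarith
  obtain ⟨ε, hεdef⟩ : ∃ e : ℝ, e = c₀^2 - c₀ - δ/2 := ⟨_, rfl⟩
  have hε : 0 < ε := by
    have h1 : (0:ℝ) < 2*c₀ - 1 - s := by nlinarith
    have h2 : (0:ℝ) < 2*c₀ - 1 + s := by nlinarith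
    have hprod := mul_pos h1 h2
    have hexp : (2*c₀-1-s)*(2*c₀-1+s) = 4*c₀^2 - 4*c₀ + 1 - s^2 := by ring
    rw [hexp, hs] at hprod
    rw [hεdef]
    linarith
  -- growth step
  have grow : ∀ x : G, ∃ z : G, ‖f x‖^2 - δ/2 ≤ ‖f z‖ := by
    intro x
    have h1 := h' x x
    have h2 : ‖2 * f x * f x‖ ≤ ‖f (x*x) + f (x*σ x)‖ + δ := by
      have := norm_sub_le (f (x*x) + f (x*σ x)) (f (x*x) + f (x*σ x) - 2 * f x * f x)
      simp only [sub_sub_cancel] at this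
      linarith
    have h3 : ‖2 * f x * f x‖ = 2 * ‖f x‖^2 := by
      rw [norm_mul, norm_mul]
      have h2c : ‖(2:ℂ)‖ = 2 := by norm_num
      rw [h2c]; ring
    have h4 : ‖f (x*x) + f (x*σ x)‖ ≤ ‖f (x*x)‖ + ‖f (x*σ x)‖ := norm_add_le _ _
    rcases le_total ‖f (x*x)‖ ‖f (x*σ x)‖ with hc | hc
    · exact ⟨x*σ x, by nlinarith⟩
    · exact ⟨x*x, by nlinarith⟩
  -- unboundedness
  have unb : ∀ B : ℝ, ∃ x : G, B ≤ ‖f x‖ := by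
    have step : ∀ n : ℕ, ∃ x : G, c₀ + n * ε ≤ ‖f x‖ := by
      intro n
      induction n with
      | zero =>
        refine ⟨x₀, ?_⟩
        simp only [Nat.cast_zero, zero_mul, add_zero]
        exact le_of_eq hc₀def
      | succ n ih =>
        obtain ⟨x, hx⟩ := ih
        obtain ⟨z, hz⟩ := grow x
        refine ⟨z, ?_⟩
        have hn0 : (0:ℝ) ≤ (n:ℝ) * ε := by positivity
        have hxc : c₀ ≤ ‖f x‖ := by linarith
        have key : ‖f x‖ + ε ≤ ‖f x‖^2 - δ/2 := by
          nlinarith [mul_nonneg (sub_nonneg.mpr hxc) (by linarith : (0:ℝ) ≤ ‖f x‖ + c₀ - 1)]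
        push_cast
        nlinarith
    intro B
    obtain ⟨n, hn⟩ := exists_nat_ge ((B - c₀)/ε)
    obtain ⟨x, hx⟩ := step n
    refine ⟨x, ?_⟩
    rw [div_le_iff₀ hε] at hn
    linarith
  -- f ∘ σ = f
  have hσf : ∀ y : G, f (σ y) = f y := by
    intro y
    by_contra hne
    have hd : 0 < ‖f (σ y) - f y‖ := norm_pos_iff.mpr (sub_ne_zero.mpr hne)
    obtain ⟨x, hx⟩ := unb (δ / ‖f (σ y) - f y‖ + 1)
    have h1 := h' x y
    have h2 := h' x (σ y)
    rw [hinv] at h2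
    have h3 : ‖2 * f x * (f (σ y) - f y)‖ ≤ 2*δ := by
      have heq : 2 * f x * (f (σ y) - f y) =
          (f (x*y) + f (x*σ y) - 2 * f x * f y)
            - (f (x*σ y) + f (x*y) - 2 * f x * f (σ y)) := by ring
      rw [heq]
      exact le_trans (norm_sub_le _ _) (by linarith)
    have h2c : ‖(2:ℂ)‖ = 2 := by norm_num
    rw [norm_mul, norm_mul, h2c] at h3
    have h5 := mul_le_mul_of_nonneg_right hx hd.le
    rw [add_mul, div_mul_cancel₀ _ (ne_of_gt hd)] at h5
    nlinarith [norm_nonneg (f x)]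
  -- main step
  intro x y
  set D : G → G → ℂ := fun u v => f (u*v) + f (u*σ v) - 2 * f u * f v with hDdef
  have hD : ∀ u v : G, ‖D u v‖ ≤ δ := fun u v => h' u v
  have hiden : ∀ a : G, (f (x*y) + f (x*σ y) - 2*f x*f y) * (2 * f a) =
      2*f x*(D y a + D (σ y) a)
        + (D x (y*a) + D x (y*σ a) + D x (σ y*a) + D x (σ y*σ a))
        - 2*f y*(D x a) - D (x*σ a) y - D (x*a) y - D (x*y) a - D (x*σ y) a := by
    intro a
    simp only [hDdef]
    simp only [hanti, hinv, hσf, mul_assoc]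
    ring
  have hE : f (x*y) + f (x*σ y) - 2*f x*f y = 0 := by
    by_contra hne
    set E : ℂ := f (x*y) + f (x*σ y) - 2*f x*f y with hEdef
    have hEpos : 0 < ‖E‖ := norm_pos_iff.mpr hne
    set C : ℝ := (4*‖f x‖ + 2*‖f y‖ + 8) * δ with hCdef
    have hC0 : 0 ≤ C := by positivity
    obtain ⟨a, ha⟩ := unb ((C + 1) / ‖E‖)
    have hbound : ‖E * (2 * f a)‖ ≤ C := by
      rw [hiden a]
      exact aux_bound (f x) (f y) _ _ _ _ _ _ _ _ _ _ _ δ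
        (hD y a) (hD (σ y) a) (hD x (y*a)) (hD x (y*σ a)) (hD x (σ y*a))
        (hD x (σ y*σ a)) (hD x a) (hD (x*σ a) y) (hD (x*a) y) (hD (x*y) a)
        (hD (x*σ y) a)
    have h2c : ‖(2:ℂ)‖ = 2 := by norm_num
    rw [norm_mul, norm_mul, h2c] at hbound
    have h5 := mul_le_mul_of_nonneg_left ha hEpos.le
    rw [mul_div_cancel₀ _ (ne_of_gt hEpos)] at h5
    nlinarith [norm_nonneg (f a)]
  exact sub_eq_zero.mp hE
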